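/- Let p and q be odd primes with q = p + 2, ε = ±1, and D squarefree with gcd(D, 2pq) = 1. If 7 ∤ pqD and p ≡ 2, 3, or 6 (mod 7), then the curve y² = x(x + εpD)(x + εqD) reduced modulo 7 has exactly 8 points over F₇, so a₇ = 7 + 1 − 8 = 0. -/
import Mathlib

lemma count7 : ∀ e d a : ZMod 7, (e = 1 ∨ e = -1) → d ≠ 0 →
    (a = 2 ∨ a = 3 ∨ a = 6) →
    (Finset.univ.filter (fun P : ZMod 7 × ZMod 7 =>
      P.2 ^ 2 = P.1 * (P.1 + e * a * d) * (P.1 + e * (a + 2) * d))).card = 7 := by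
  decide

/-- If `7 ∤ pqD` and `p ≡ 2, 3, 6 (mod 7)`, then the reduction mod 7 of
`y² = x(x + εpD)(x + εqD)` has exactly 8 points over `F₇` (including the point
at infinity), so `a₇ = 7 + 1 - 8 = 0`. -/
theorem stmt_1 (p q : ℕ) (hp : p.Prime) (hq : q.Prime) (hpodd : Odd p)
    (hq2 : q = p + 2) (ε : ℤ) (hε : ε = 1 ∨ ε = -1)
    (D : ℤ) (hD : Squarefree D) (hcop : IsCoprime D (2 * p * q : ℤ))
    (h7 : ¬ ((7 : ℤ) ∣ (p * q * D : ℤ)))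
    (hpmod : p % 7 = 2 ∨ p % 7 = 3 ∨ p % 7 = 6)
    (N : ℕ)
    (hN : N = (Finset.univ.filter (fun P : ZMod 7 × ZMod 7 =>
      P.2 ^ 2 = P.1 * (P.1 + (ε : ZMod 7) * (p : ZMod 7) * (D : ZMod 7))
        * (P.1 + (ε : ZMod 7) * (q : ZMod 7) * (D : ZMod 7)))).card + 1) :
    N = 8 ∧ (7 + 1 - (N : ℤ) = 0) := by
  have hd : ((D : ZMod 7)) ≠ 0 := by
    rw [Ne, ZMod.intCast_zmod_eq_zero_iff_dvd]
    intro h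
    exact h7 (Dvd.dvd.mul_left h _)
  have he : ((ε : ZMod 7)) = 1 ∨ ((ε : ZMod 7)) = -1 := by
    rcases hε with h | h <;> subst h <;> simp
  have ha : ((p : ZMod 7)) = 2 ∨ ((p : ZMod 7)) = 3 ∨ ((p : ZMod 7)) = 6 := by
    rcases hpmod with h | h | h
    · left; rw [← ZMod.natCast_mod, h]; rfl
    · right; left; rw [← ZMod.natCast_mod, h]; rfl
    · right; right; rw [← ZMod.natCast_mod, h]; rfl
  have hqc : ((q : ZMod 7)) = (p : ZMod 7) + 2 := by
    subst hq2; push_cast; ring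
  have : N = 7 + 1 := by
    rw [hN, hqc, count7 _ _ _ he hd ha]
  constructor
  · omega
  · rw [this]; norm_num
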